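/- In a finite super-modular game with binary actions, a subset S ⊆ V is a sufficient control set if and only if the profile 𝟙_S belongs to the reachable set Z, i.e., if and only if there exists a finite sequence of profiles y^0 = 𝟙 (the all-ones profile), y^1, …, y^l = 𝟙_S such that for each k, y^k = y^{k−1} − δ_{i_k} for some player i_k with u_{i_k}(y^k) ≤ u_{i_k}(y^{k−1}). -/

import Mathlib

open Finset

/-- The indicator strategy profile `𝟙_S` of a set of players `S`: action `1` (here `true`)
on `S` and `0` (here `false`) elsewhere. -/
def indicator {V : Type*} [DecidableEq V] (S : Finset V) : V → Bool :=
  fun i => decide (i ∈ S)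

/-- A finite binary-action game with utilities `u` is super-modular (has increasing
differences) if for every player `i` and profiles `x, y` with `x_{-i} ≥ y_{-i}`
componentwise, `u_i(1, x_{-i}) − u_i(0, x_{-i}) ≥ u_i(1, y_{-i}) − u_i(0, y_{-i})`. -/
def Supermodular {V : Type*} [DecidableEq V] (u : V → (V → Bool) → ℝ) : Prop :=
  ∀ (i : V) (x y : V → Bool), (∀ j, j ≠ i → y j ≤ x j) →
    u i (Function.update y i true) - u i (Function.update y i false) ≤
      u i (Function.update x i true) - u i (Function.update x i false)

/-- An improvement path from `S` to `T`: a sequence of profiles starting at `𝟙_S` and ending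
at `𝟙_T` such that at each step some player `i ∉ S` flips her action (the profile changes
exactly in coordinate `i`) without decreasing her utility. -/
def IsImprovementPath {V : Type*} [Fintype V] [DecidableEq V]
    (u : V → (V → Bool) → ℝ) (S T : Finset V) : Prop :=
  ∃ (m : ℕ) (x : ℕ → V → Bool),
    x 0 = indicator S ∧ x m = indicator T ∧
    ∀ k < m, ∃ i, i ∉ S ∧
      x (k + 1) = Function.update (x k) i (!(x k i)) ∧
      u i (x k) ≤ u i (x (k + 1))

/-- `S` is a sufficient control set if there is an improvement path from `S` to the whole
player set `V`. -/
def SufficientControlSet {V : Type*} [Fintype V] [DecidableEq V]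
    (u : V → (V → Bool) → ℝ) (S : Finset V) : Prop :=
  IsImprovementPath u S Finset.univ


/-- The reachable set `Z`: a profile `x` belongs to `Z` if there is a finite sequence of
profiles starting from the all-ones profile `𝟙` and ending at `x` in which, at each step,
some player `i` playing `1` switches to `0` (the profile decreases by `δ_i`) without
increasing her utility (`u_i(y^k) ≤ u_i(y^{k−1})`). -/
def ReachableFromTop {V : Type*} [DecidableEq V] (u : V → (V → Bool) → ℝ)
    (x : V → Bool) : Prop :=
  ∃ (l : ℕ) (y : ℕ → V → Bool),
    y 0 = (fun _ => true) ∧ y l = x ∧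
    ∀ k < l, ∃ i, y k i = true ∧ y (k + 1) = Function.update (y k) i false ∧
      u i (y (k + 1)) ≤ u i (y k)

/-- Extend a downward path by one more down-flip. -/
lemma reach_extend {V : Type*} [DecidableEq V] (u : V → (V → Bool) → ℝ)
    {b : V → Bool} (hb : ReachableFromTop u b) (i : V) (hi : b i = true)
    (hui : u i (Function.update b i false) ≤ u i b) :
    ReachableFromTop u (Function.update b i false) := by
  obtain ⟨l, y, h0, hl, hstep⟩ := hb
  refine ⟨l + 1, fun k => if k ≤ l then y k else Function.update b i false, ?_, ?_, ?_⟩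
  · simpa using h0
  · simp
  · intro k hk
    rcases lt_or_ge k l with h | h
    · obtain ⟨j, h1, h2, h3⟩ := hstep k h
      refine ⟨j, ?_, ?_, ?_⟩ <;>
        simp only [if_pos (le_of_lt h), if_pos (Nat.succ_le_of_lt h)] <;> assumption
    · have hkl : k = l := by omega
      subst hkl
      have hne : ¬ (k + 1 ≤ k) := by omega
      refine ⟨i, ?_, ?_, ?_⟩
      · simpa [hl] using hi
      · simp [hl, hne]
      · simpa [hl, hne] using hui

/-- A (possibly stuttering) monotone up-improvement path ending at the all-ones profile
can be reversed into a downward path. -/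
lemma reach_of_up_path {V : Type*} [DecidableEq V] (u : V → (V → Bool) → ℝ) :
    ∀ (m : ℕ) (z : ℕ → V → Bool), z m = (fun _ => true) →
    (∀ k < m, z (k + 1) = z k ∨ ∃ i, z k i = false ∧
      z (k + 1) = Function.update (z k) i true ∧ u i (z k) ≤ u i (z (k + 1))) →
    ReachableFromTop u (z 0) := by
  intro m
  induction m with
  | zero =>
    intro z hm _
    exact ⟨0, fun _ => z 0, hm, rfl, by omega⟩
  | succ m ih =>
    intro z hm hstep
    have h1 : ReachableFromTop u (z 1) := by
      have := ih (fun k => z (k + 1)) hm (fun k hk => hstep (k + 1) (by omega))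
      simpa using this
    rcases hstep 0 (by omega) with h | ⟨i, hfi, hupd, hui⟩
    · rwa [← h]
    · have hz1i : z 1 i = true := by rw [hupd]; simp
      have hz0 : z 0 = Function.update (z 1) i false := by
        funext j
        rcases eq_or_ne j i with rfl | hj
        · simp [hfi]
        · rw [hupd]; simp [Function.update_of_ne hj]
      rw [hz0]
      apply reach_extend u h1 i hz1i
      rw [← hz0]
      exact le_trans hui (le_of_eq rfl)

theorem sufficient_iff_reachable
    {V : Type*} [Fintype V] [DecidableEq V]
    (u : V → (V → Bool) → ℝ) (hu : Supermodular u) (S : Finset V) :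
    SufficientControlSet u S ↔ ReachableFromTop u (indicator S) := by
  constructor
  · rintro ⟨m, x, h0, hm, hstep⟩
    -- the running supremum of the path
    set z : ℕ → V → Bool := fun k j => decide (∃ k' ≤ k, x k' j = true) with hz
    have hxle : ∀ k k' j, k' ≤ k → x k' j = true → z k j = true := by
      intro k k' j hk hx
      simp only [hz, decide_eq_true_iff]
      exact ⟨k', hk, hx⟩
    have hz0 : z 0 = indicator S := by
      funext j
      have : z 0 j = decide (x 0 j = true) := by
        simp only [hz, decide_eq_decide]
        exact ⟨fun ⟨k', hk', h⟩ => by rwa [Nat.le_zero.mp hk'] at h, fun h => ⟨0, le_refl _, h⟩⟩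
      rw [this, h0]
      simp [indicator]
    have hzm : z m = fun _ => true := by
      funext j
      apply hxle m m j le_rfl
      rw [hm]; simp [indicator]
    have hzsucc : ∀ k j, z (k + 1) j = (z k j || x (k + 1) j) := by
      intro k j
      simp only [hz, Bool.or_eq_true, decide_eq_true_iff]
      apply Bool.eq_iff_iff.mpr
      simp only [Bool.or_eq_true, decide_eq_true_iff]
      constructor
      · rintro ⟨k', hk', h⟩
        rcases Nat.lt_or_ge k' (k + 1) with h' | h'
        · exact Or.inl ⟨k', by omega, h⟩
        · exact Or.inr (by rwa [show k' = k + 1 by omega] at h)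
      · rintro (⟨k', hk', h⟩ | h)
        · exact ⟨k', by omega, h⟩
        · exact ⟨k + 1, le_refl _, h⟩
    have hmono : ∀ k j, x k j = true → z k j = true := fun k j => hxle k k j le_rfl
    have hzstep : ∀ k < m, z (k + 1) = z k ∨ ∃ i, z k i = false ∧
        z (k + 1) = Function.update (z k) i true ∧ u i (z k) ≤ u i (z (k + 1)) := by
      intro k hk
      obtain ⟨i, hiS, hupd, hui⟩ := hstep k hk
      cases hxk : x k i with
      | true =>
        -- down-flip of x: sup unchanged
        left
        funext j
        rw [hzsucc]
        rcases eq_or_ne j i with rfl | hj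
        · simp [hupd, hxk, hmono k j hxk]
        · rw [hupd]
          simp only [Function.update_of_ne hj]
          cases hxj : x k j
          · simp
          · simp [hmono k j hxj]
      | false =>
        have hx1 : x (k + 1) = Function.update (x k) i true := by
          rw [hupd, hxk]; simp only [Bool.not_false]
        cases hzk : z k i with
        | true =>
          left
          funext j
          rw [hzsucc, hx1]
          rcases eq_or_ne j i with rfl | hj
          · simp [hzk]
          · simp only [Function.update_of_ne hj]
            cases hxj : x k j
            · simp
            · simp [hmono k j hxj]
        | false =>
          right
          refine ⟨i, hzk, ?_, ?_⟩
          · funext j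
            rw [hzsucc, hx1]
            rcases eq_or_ne j i with rfl | hj
            · simp
            · simp only [Function.update_of_ne hj]
              cases hxj : x k j
              · simp
              · simp [hmono k j hxj]
          · -- supermodularity
            have hle : ∀ j, j ≠ i → x k j ≤ z k j := by
              intro j _
              cases hxj : x k j
              · exact Bool.false_le _
              · rw [hmono k j hxj]
            have hsm := hu i (z k) (x k) hle
            have e1 : Function.update (x k) i false = x k := by
              funext j
              rcases eq_or_ne j i with rfl | hj
              · simp [hxk]
              · simp [Function.update_of_ne hj]
            have e2 : Function.update (z k) i false = z k := by
              funext j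
              rcases eq_or_ne j i with rfl | hj
              · simp [hzk]
              · simp [Function.update_of_ne hj]
            have e3 : z (k + 1) = Function.update (z k) i true := by
              funext j
              rw [hzsucc, hx1]
              rcases eq_or_ne j i with rfl | hj
              · simp
              · simp only [Function.update_of_ne hj]
                cases hxj : x k j
                · simp
                · simp [hmono k j hxj]
            rw [e1, e2, ← hx1, ← e3] at hsm
            have h2 : (0 : ℝ) ≤ u i (x (k + 1)) - u i (x k) := by linarith
            linarith
    have := reach_of_up_path u m z hzm hzstep
    rwa [hz0] at this
  · rintro ⟨l, y, h0, hl, hstep⟩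
    -- once false, always false
    have hpersist : ∀ a b, a ≤ b → b ≤ l → ∀ j, y a j = false → y b j = false := by
      intro a b hab hbl j hj
      induction b with
      | zero => rwa [Nat.le_zero.mp hab] at hj
      | succ b ih =>
        rcases Nat.lt_or_ge a (b + 1) with h | h
        · have hb : y b j = false := ih (by omega) (by omega)
          obtain ⟨i, _, hupd, _⟩ := hstep b (by omega)
          rw [hupd]
          rcases eq_or_ne j i with rfl | hji
          · simp
          · simp [Function.update_of_ne hji, hb]
        · rwa [show a = b + 1 by omega] at hj
    refine ⟨l, fun k => y (l - k), ?_, ?_, ?_⟩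
    · simpa using hl
    · simp only [Nat.sub_self, h0]
      funext j
      simp [indicator]
    · intro k hk
      obtain ⟨i, hyi, hupd, hui⟩ := hstep (l - k - 1) (by omega)
      have hlk : l - k = (l - k - 1) + 1 := by omega
      have hfalse : y (l - k) i = false := by
        rw [hlk, hupd]; simp
      have hiS : i ∉ S := by
        have := hpersist (l - k) l (by omega) le_rfl i hfalse
        rw [hl] at this
        simpa [indicator] using this
      refine ⟨i, hiS, ?_, ?_⟩
      · have hrev : y (l - (k + 1)) = Function.update (y (l - k)) i true := by
          funext j
          rcases eq_or_ne j i with rfl | hj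
          · rw [show l - (k+1) = l - k - 1 by omega]; simpa using hyi.symm
          · rw [show l - (k+1) = l - k - 1 by omega, hlk, hupd]
            simp [Function.update_of_ne hj]
        show y (l - (k + 1)) = Function.update (y (l - k)) i (!(y (l - k) i))
        rw [hfalse, hrev]; simp only [Bool.not_false]
      · show u i (y (l - k)) ≤ u i (y (l - (k + 1)))
        rw [show l - (k+1) = l - k - 1 by omega, hlk]
        exact hui
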